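/- For the (3,-2) reduction of the plus-KdV equation with v₅ = v₀/(v₀v₂ + v₀v₃ - 1), the function J₂ = (v₂v₄-1)(v₁v₃-1)(v₀v₂-1)/(v₀v₁v₂v₃v₄) satisfies J₂(v₁,...,v₅) = -J₂(v₀,...,v₄). -/

import Mathlib

/-- J₂ is a 2-integral (anti-integral) of the (3,-2) plus-KdV reduction. -/
theorem plus_kdv_J2_anti_integral (v0 v1 v2 v3 v4 : ℝ)
    (h0 : v0 ≠ 0) (h1 : v1 ≠ 0) (h2 : v2 ≠ 0) (h3 : v3 ≠ 0) (h4 : v4 ≠ 0)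
    (hden : v0 * v2 + v0 * v3 - 1 ≠ 0)
    (v5 : ℝ) (hv5 : v5 = v0 / (v0 * v2 + v0 * v3 - 1)) :
    (v3 * v5 - 1) * (v2 * v4 - 1) * (v1 * v3 - 1) / (v1 * v2 * v3 * v4 * v5)
      = -((v2 * v4 - 1) * (v1 * v3 - 1) * (v0 * v2 - 1) / (v0 * v1 * v2 * v3 * v4)) := by
  subst hv5
  generalize hD : v0 * v2 + v0 * v3 - 1 = D at hden ⊢
  field_simp
  rw [← hD]
  ring
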